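/- Let Q ⊂ ℝⁿ be a cube with side length ℓ(Q), let t ∈ ℝ, and let u : ℝⁿ × ℝ → ℂ be a function such that for every ball B(X,2r) contained in the slab 2Q × (t−ℓ(Q), t+ℓ(Q)) one has the Caccioppoli-type inequality ⨍_{B(X,r)} |∂_s u(x,s)|² dx ds ≤ (c₀/r²) ⨍_{B(X,2r)} |u(x,s)|² dx ds. Then ∫_Q |u(x,t)|² dx ≤ C(c₀,n) ℓ(Q)^{-1} ∫_{2Q} ∫_{t−ℓ(Q)}^{t+ℓ(Q)} |u(x,s)|² ds dx. -/

import Mathlib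

open MeasureTheory

/-- If `u` satisfies a Caccioppoli-type inequality for its vertical
derivative `v = ∂ₛ u` in every ball contained in the slab `2Q × (t - ℓ(Q), t + ℓ(Q))`,
then the L² norm of `u` on the horizontal slice `Q × {t}` is controlled by its L² norm
on the slab.  The cube `Q` has center `c` and side length `L`. -/
lemma sq_int_le {α : Type*} [MeasurableSpace α] {μ : Measure α} [IsFiniteMeasure μ]
    {f : α → ℝ} (hf : Integrable f μ) (hf2 : Integrable (fun x => f x ^ 2) μ) :
    (∫ x, f x ∂μ) ^ 2 ≤ (μ Set.univ).toReal * ∫ x, f x ^ 2 ∂μ := by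
  set m : ℝ := (μ Set.univ).toReal with hm
  have hm0 : 0 ≤ m := ENNReal.toReal_nonneg
  rcases eq_or_lt_of_le hm0 with h0 | hpos
  · have hμ : μ = 0 := by
      have hne := (measure_ne_top μ Set.univ)
      have h' : μ Set.univ = 0 := by
        have := h0.symm
        rw [hm, ENNReal.toReal_eq_zero_iff] at this
        exact this.resolve_right hne
      exact Measure.measure_univ_eq_zero.mp h'
    simp [hμ]
  · set a : ℝ := (∫ x, f x ∂μ) / m with ha
    have hfa : Integrable (fun x => 2 * a * f x) μ := hf.const_mul _
    have key : 0 ≤ ∫ x, (f x - a) ^ 2 ∂μ := integral_nonneg fun x => sq_nonneg _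
    have expand : ∫ x, (f x - a) ^ 2 ∂μ
        = ∫ x, f x ^ 2 ∂μ - 2 * a * ∫ x, f x ∂μ + a ^ 2 * m := by
      have h1 : (fun x => (f x - a) ^ 2) = fun x => (f x ^ 2 - 2 * a * f x) + a ^ 2 := by
        funext x; ring
      rw [h1, integral_add (f := fun x => f x ^ 2 - 2 * a * f x) (g := fun _ => a ^ 2)
        (hf2.sub hfa) (integrable_const _), integral_sub hf2 hfa,
        integral_const_mul, integral_const]
      simp [hm, smul_eq_mul, mul_comm, measureReal_def]
    rw [expand] at key
    have hIm : ∫ x, f x ∂μ = a * m := by rw [ha, div_mul_cancel₀ _ hpos.ne']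
    nlinarith [key, sq_nonneg a, hpos]

theorem stmt_0 (n : ℕ) (c₀ : ℝ) (hc₀ : 0 < c₀) :
    ∃ C : ℝ, 0 < C ∧
      ∀ (c : Fin n → ℝ) (L t : ℝ), 0 < L →
      ∀ u v : (Fin n → ℝ) × ℝ → ℂ,
        (∀ p : (Fin n → ℝ) × ℝ, HasDerivAt (fun s => u (p.1, s)) (v p) p.2) →
        IntegrableOn (fun p => ‖u p‖ ^ 2)
          ({x : Fin n → ℝ | ∀ i, |x i - c i| ≤ L} ×ˢ Set.Ioo (t - L) (t + L)) volume →
        IntegrableOn (fun p => ‖v p‖ ^ 2)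
          ({x : Fin n → ℝ | ∀ i, |x i - c i| ≤ L} ×ˢ Set.Ioo (t - L) (t + L)) volume →
        (∀ (X : (Fin n → ℝ) × ℝ) (r : ℝ), 0 < r →
          Metric.ball X (2 * r) ⊆
            {x : Fin n → ℝ | ∀ i, |x i - c i| ≤ L} ×ˢ Set.Ioo (t - L) (t + L) →
          (⨍ p in Metric.ball X r, ‖v p‖ ^ 2) ≤
            c₀ / r ^ 2 * ⨍ p in Metric.ball X (2 * r), ‖u p‖ ^ 2) →
        (∫ x in {x : Fin n → ℝ | ∀ i, |x i - c i| ≤ L / 2}, ‖u (x, t)‖ ^ 2) ≤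
          C / L * ∫ x in {x : Fin n → ℝ | ∀ i, |x i - c i| ≤ L},
            ∫ s in Set.Ioo (t - L) (t + L), ‖u (x, s)‖ ^ 2 := by
  refine ⟨2 + 8 * c₀, by positivity, ?_⟩
  intro c L t hL u v hderiv hu2 hv2 hcacc
  have hL2 : 0 < L / 2 := by positivity
  set A : Set (Fin n → ℝ) := Metric.closedBall c L with hA
  set A2 : Set (Fin n → ℝ) := Metric.closedBall c (L / 2) with hA2
  set T : Set ℝ := Set.Ioo (t - L) (t + L) with hT
  set I : Set ℝ := Set.Ioo (t - L / 2) (t + L / 2) with hI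
  have hAset : {x : Fin n → ℝ | ∀ i, |x i - c i| ≤ L} = A := by
    ext x
    simp only [Set.mem_setOf_eq, hA, Metric.mem_closedBall, dist_pi_le_iff hL.le, Real.dist_eq]
  have hA2set : {x : Fin n → ℝ | ∀ i, |x i - c i| ≤ L / 2} = A2 := by
    ext x
    simp only [Set.mem_setOf_eq, hA2, Metric.mem_closedBall, dist_pi_le_iff hL2.le, Real.dist_eq]
  rw [hAset] at hu2 hv2 hcacc ⊢
  rw [hA2set]
  have hIsubT : I ⊆ T := Set.Ioo_subset_Ioo (by linarith) (by linarith)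
  have hA2subA : A2 ⊆ A := Metric.closedBall_subset_closedBall (by linarith)
  -- product measure forms
  have hu2' : Integrable (fun p => ‖u p‖ ^ 2) ((volume.restrict A).prod (volume.restrict T)) := by
    rw [Measure.prod_restrict, ← Measure.volume_eq_prod]; exact hu2
  have hv2' : Integrable (fun p => ‖v p‖ ^ 2) ((volume.restrict A).prod (volume.restrict T)) := by
    rw [Measure.prod_restrict, ← Measure.volume_eq_prod]; exact hv2
  have huAI : Integrable (fun p => ‖u p‖ ^ 2) ((volume.restrict A).prod (volume.restrict I)) := by
    rw [Measure.prod_restrict, ← Measure.volume_eq_prod]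
    exact hu2.mono_set (Set.prod_mono subset_rfl hIsubT)
  have hvAI : Integrable (fun p => ‖v p‖ ^ 2) ((volume.restrict A).prod (volume.restrict I)) := by
    rw [Measure.prod_restrict, ← Measure.volume_eq_prod]
    exact hv2.mono_set (Set.prod_mono subset_rfl hIsubT)
  have haeu : ∀ᵐ x ∂volume.restrict A,
      Integrable (fun s => ‖u (x, s)‖ ^ 2) (volume.restrict T) := hu2'.prod_right_ae
  have haev : ∀ᵐ x ∂volume.restrict A,
      Integrable (fun s => ‖v (x, s)‖ ^ 2) (volume.restrict T) := hv2'.prod_right_ae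
  have hIu : Integrable (fun x => ∫ s in T, ‖u (x, s)‖ ^ 2) (volume.restrict A) :=
    hu2'.integral_prod_left
  have hIuI : Integrable (fun x => ∫ s in I, ‖u (x, s)‖ ^ 2) (volume.restrict A) :=
    huAI.integral_prod_left
  have hIvI : Integrable (fun x => ∫ s in I, ‖v (x, s)‖ ^ 2) (volume.restrict A) :=
    hvAI.integral_prod_left
  have hvolI : (volume I).toReal = L := by
    rw [hI, Real.volume_Ioo, ENNReal.toReal_ofReal (by linarith)]; ring
  have hfinI : volume I ≠ ⊤ := by rw [hI, Real.volume_Ioo]; exact ENNReal.ofReal_ne_top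
  haveI hfinMI : IsFiniteMeasure (volume.restrict I) :=
    ⟨by rw [Measure.restrict_apply_univ]; exact lt_top_iff_ne_top.2 hfinI⟩
  -- Step 1: pointwise (a.e.) slice bound
  have key : ∀ᵐ x ∂volume.restrict A,
      L * ‖u (x, t)‖ ^ 2 ≤ 2 * (∫ s in I, ‖u (x, s)‖ ^ 2)
        + 2 * L ^ 2 * (∫ s in I, ‖v (x, s)‖ ^ 2) := by
    filter_upwards [haeu, haev] with x hux hvx
    have huI : IntegrableOn (fun s => ‖u (x, s)‖ ^ 2) I volume := hux.mono_measure (Measure.restrict_mono hIsubT le_rfl)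
    have hvIsq : IntegrableOn (fun s => ‖v (x, s)‖ ^ 2) I volume := hvx.mono_measure (Measure.restrict_mono hIsubT le_rfl)
    have hvm : StronglyMeasurable (fun s => v (x, s)) := by
      have h : (fun s => v (x, s)) = deriv (fun s => u (x, s)) := by
        funext s; exact ((hderiv (x, s)).deriv).symm
      rw [h]; exact stronglyMeasurable_deriv _
    have hvI : IntegrableOn (fun s => v (x, s)) I volume := by
      refine Integrable.mono' (g := fun s => 1 + ‖v (x, s)‖ ^ 2)
        ((integrable_const 1).add hvIsq) hvm.aestronglyMeasurable.restrict
        (Filter.Eventually.of_forall fun s => ?_)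
      show ‖v (x, s)‖ ≤ 1 + ‖v (x, s)‖ ^ 2
      have h0 : (0:ℝ) ≤ ‖v (x, s)‖ := norm_nonneg _
      nlinarith [sq_nonneg (‖v (x, s)‖ - 1)]
    have hnI : IntegrableOn (fun s => ‖v (x, s)‖) I volume := hvI.norm
    set B : ℝ := ∫ s in I, ‖v (x, s)‖ with hB
    have hBnn : 0 ≤ B := integral_nonneg fun s => norm_nonneg _
    have hCS : B ^ 2 ≤ L * ∫ s in I, ‖v (x, s)‖ ^ 2 := by
      have h := sq_int_le (μ := volume.restrict I) hnI hvIsq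
      rwa [Measure.restrict_apply_univ, hvolI] at h
    have htI : t ∈ I := by
      rw [hI]; constructor <;> simp <;> linarith
    have hsb : ∀ s ∈ I, ‖u (x, t)‖ ^ 2 ≤ 2 * ‖u (x, s)‖ ^ 2 + 2 * B ^ 2 := by
      intro s hs
      have hsubcc : Set.uIcc s t ⊆ I := Set.ordConnected_Ioo.uIcc_subset hs htI
      have hsuboc : Set.uIoc s t ⊆ I := Set.uIoc_subset_uIcc.trans hsubcc
      have hii : IntervalIntegrable (fun σ => v (x, σ)) volume s t := by
        rw [intervalIntegrable_iff]
        exact hvI.mono_set hsuboc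
      have hd : ∀ σ ∈ Set.uIcc s t, HasDerivAt (fun σ' => u (x, σ')) (v (x, σ)) σ :=
        fun σ _ => hderiv (x, σ)
      have hftc := intervalIntegral.integral_eq_sub_of_hasDerivAt hd hii
      have hnorm : ‖u (x, t)‖ ≤ ‖u (x, s)‖ + B := by
        have h1 : u (x, t) = u (x, s) + ∫ σ in s..t, v (x, σ) := by
          rw [hftc]; ring
        calc ‖u (x, t)‖ = ‖u (x, s) + ∫ σ in s..t, v (x, σ)‖ := by rw [← h1]
          _ ≤ ‖u (x, s)‖ + ‖∫ σ in s..t, v (x, σ)‖ := norm_add_le _ _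
          _ ≤ ‖u (x, s)‖ + B := by
              have h2 : ‖∫ σ in s..t, v (x, σ)‖ ≤ ∫ σ in Set.uIoc s t, ‖v (x, σ)‖ :=
                intervalIntegral.norm_integral_le_integral_norm_uIoc
              have h3 : ∫ σ in Set.uIoc s t, ‖v (x, σ)‖ ≤ B :=
                setIntegral_mono_set hnI
                  (Filter.Eventually.of_forall fun _ => norm_nonneg _)
                  hsuboc.eventuallyLE
              linarith
      have hsq : ‖u (x, t)‖ * ‖u (x, t)‖ ≤ (‖u (x, s)‖ + B) * (‖u (x, s)‖ + B) :=
        mul_le_mul hnorm hnorm (norm_nonneg _) (by positivity)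
      nlinarith [sq_nonneg (‖u (x, s)‖ - B)]
    have hintmono : ∫ s in I, ‖u (x, t)‖ ^ 2 ≤ ∫ s in I, (2 * ‖u (x, s)‖ ^ 2 + 2 * B ^ 2) := by
      refine setIntegral_mono_on (integrable_const _)
        ((huI.const_mul 2).add (integrable_const _)) measurableSet_Ioo hsb
    rw [setIntegral_const, measureReal_def, hvolI, smul_eq_mul] at hintmono
    have hrhs : ∫ s in I, (2 * ‖u (x, s)‖ ^ 2 + 2 * B ^ 2)
        = 2 * (∫ s in I, ‖u (x, s)‖ ^ 2) + L * (2 * B ^ 2) := by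
      rw [integral_add (huI.const_mul 2) (integrable_const _), integral_const_mul,
        setIntegral_const, measureReal_def, hvolI, smul_eq_mul]
    rw [hrhs] at hintmono
    nlinarith [hCS, hL]
  -- Step 2: integrate over A2
  have keyA2 : ∀ᵐ x ∂volume.restrict A2,
      L * ‖u (x, t)‖ ^ 2 ≤ 2 * (∫ s in I, ‖u (x, s)‖ ^ 2)
        + 2 * L ^ 2 * (∫ s in I, ‖v (x, s)‖ ^ 2) :=
    ae_restrict_of_ae_restrict_of_subset hA2subA key
  set J : ℝ := ∫ x in A, ∫ s in T, ‖u (x, s)‖ ^ 2 with hJ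
  have hJnn : 0 ≤ J := integral_nonneg fun x => integral_nonneg fun s => by positivity
  have hgint : Integrable (fun x => 2 * (∫ s in I, ‖u (x, s)‖ ^ 2)
      + 2 * L ^ 2 * (∫ s in I, ‖v (x, s)‖ ^ 2)) (volume.restrict A2) :=
    ((hIuI.const_mul 2).add (hIvI.const_mul (2 * L ^ 2))).mono_measure (Measure.restrict_mono hA2subA le_rfl)
  have step2 : L * (∫ x in A2, ‖u (x, t)‖ ^ 2)
      ≤ 2 * (∫ x in A2, ∫ s in I, ‖u (x, s)‖ ^ 2)
        + 2 * L ^ 2 * (∫ x in A2, ∫ s in I, ‖v (x, s)‖ ^ 2) := by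
    have h1 : ∫ x in A2, L * ‖u (x, t)‖ ^ 2
        ≤ ∫ x in A2, (2 * (∫ s in I, ‖u (x, s)‖ ^ 2)
            + 2 * L ^ 2 * (∫ s in I, ‖v (x, s)‖ ^ 2)) :=
      integral_mono_of_nonneg
        (Filter.Eventually.of_forall fun x => by positivity) hgint keyA2
    rw [integral_const_mul] at h1
    rwa [integral_add ((hIuI.const_mul 2).mono_measure (Measure.restrict_mono hA2subA le_rfl))
      ((hIvI.const_mul (2 * L ^ 2)).mono_measure (Measure.restrict_mono hA2subA le_rfl)), integral_const_mul,
      integral_const_mul] at h1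
  -- Step 3: u-term
  have stepu : (∫ x in A2, ∫ s in I, ‖u (x, s)‖ ^ 2) ≤ J := by
    have hle : ∀ᵐ x ∂volume.restrict A2, (∫ s in I, ‖u (x, s)‖ ^ 2)
        ≤ ∫ s in T, ‖u (x, s)‖ ^ 2 := by
      refine ae_restrict_of_ae_restrict_of_subset hA2subA ?_
      filter_upwards [haeu] with x hux
      exact setIntegral_mono_set hux
        (Filter.Eventually.of_forall fun s => by positivity) hIsubT.eventuallyLE
    have h1 : (∫ x in A2, ∫ s in I, ‖u (x, s)‖ ^ 2)
        ≤ ∫ x in A2, ∫ s in T, ‖u (x, s)‖ ^ 2 :=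
      integral_mono_of_nonneg
        (Filter.Eventually.of_forall fun x => integral_nonneg fun s => by positivity)
        (hIu.mono_measure (Measure.restrict_mono hA2subA le_rfl)) hle
    refine h1.trans (setIntegral_mono_set hIu
      (Filter.Eventually.of_forall fun x => integral_nonneg fun s => by positivity)
      hA2subA.eventuallyLE)
  -- Step 4: v-term via Caccioppoli
  have hvol : (volume : Measure ((Fin n → ℝ) × ℝ))
      = (volume : Measure (Fin n → ℝ)).prod volume := Measure.volume_eq_prod _ _
  have hcbIcc : Metric.closedBall t (L / 2) = Set.Icc (t - L / 2) (t + L / 2) :=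
    Real.closedBall_eq_Icc
  have hcb_sub : Metric.closedBall ((c, t) : (Fin n → ℝ) × ℝ) (L / 2) ⊆ A ×ˢ T := by
    rw [← closedBall_prod_same]
    refine Set.prod_mono (Metric.closedBall_subset_closedBall (by linarith)) ?_
    rw [hcbIcc, hT]
    exact Set.Icc_subset_Ioo (by linarith) (by linarith)
  have hA2I_sub : A2 ×ˢ I ⊆ Metric.closedBall ((c, t) : (Fin n → ℝ) × ℝ) (L / 2) := by
    rw [← closedBall_prod_same]
    refine Set.prod_mono subset_rfl ?_
    rw [hcbIcc, hI]
    exact Set.Ioo_subset_Icc_self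
  have hball_sub : Metric.ball ((c, t) : (Fin n → ℝ) × ℝ) L ⊆ A ×ˢ T := by
    rw [← ball_prod_same]
    exact Set.prod_mono Metric.ball_subset_closedBall (Real.ball_eq_Ioo t L).subset
  have stepv : (∫ x in A2, ∫ s in I, ‖v (x, s)‖ ^ 2) ≤ 4 * c₀ / L ^ 2 * J := by
    have hvA2I' : IntegrableOn (fun p => ‖v p‖ ^ 2) (A2 ×ˢ I) volume :=
      hv2.mono_set (Set.prod_mono hA2subA hIsubT)
    have heqF : ∫ x in A2, ∫ s in I, ‖v (x, s)‖ ^ 2 = ∫ p in A2 ×ˢ I, ‖v p‖ ^ 2 := by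
      have h := setIntegral_prod (μ := (volume : Measure (Fin n → ℝ)))
        (ν := (volume : Measure ℝ)) (s := A2) (t := I)
        (fun p : (Fin n → ℝ) × ℝ => ‖v p‖ ^ 2) (hvol ▸ hvA2I')
      rw [← hvol] at h
      exact h.symm
    have hvcb : IntegrableOn (fun p => ‖v p‖ ^ 2)
        (Metric.closedBall ((c, t) : (Fin n → ℝ) × ℝ) (L / 2)) volume :=
      hv2.mono_set hcb_sub
    have s1 : ∫ p in A2 ×ˢ I, ‖v p‖ ^ 2
        ≤ ∫ p in Metric.closedBall ((c, t) : (Fin n → ℝ) × ℝ) (L / 2), ‖v p‖ ^ 2 :=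
      setIntegral_mono_set hvcb (Filter.Eventually.of_forall fun p => by positivity)
        hA2I_sub.eventuallyLE
    have hzero : volume (Metric.sphere ((c, t) : (Fin n → ℝ) × ℝ) (L / 2)) = 0 := by
      rw [hvol]
      exact Measure.addHaar_sphere _ _ _
    have hsphere : (Metric.ball ((c, t) : (Fin n → ℝ) × ℝ) (L / 2) : Set _)
        =ᵐ[volume] Metric.closedBall ((c, t) : (Fin n → ℝ) × ℝ) (L / 2) := by
      rw [MeasureTheory.ae_eq_set]
      constructor
      · rw [Set.diff_eq_empty.2 Metric.ball_subset_closedBall]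
        simp
      · rw [Metric.closedBall_diff_ball]
        exact hzero
    have s2 : ∫ p in Metric.closedBall ((c, t) : (Fin n → ℝ) × ℝ) (L / 2), ‖v p‖ ^ 2
        = ∫ p in Metric.ball ((c, t) : (Fin n → ℝ) × ℝ) (L / 2), ‖v p‖ ^ 2 :=
      (setIntegral_congr_set hsphere).symm
    -- Caccioppoli
    have hsubcac : Metric.ball ((c, t) : (Fin n → ℝ) × ℝ) (2 * (L / 2)) ⊆ A ×ˢ T := by
      rw [show 2 * (L / 2) = L by ring]
      exact hball_sub
    have hcac := hcacc (c, t) (L / 2) hL2 hsubcac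
    rw [show 2 * (L / 2) = L by ring] at hcac
    set S1 : ℝ := ∫ p in Metric.ball ((c, t) : (Fin n → ℝ) × ℝ) (L / 2), ‖v p‖ ^ 2 with hS1
    set S2 : ℝ := ∫ p in Metric.ball ((c, t) : (Fin n → ℝ) × ℝ) L, ‖u p‖ ^ 2 with hS2
    have hS2nn : 0 ≤ S2 := integral_nonneg fun p => by positivity
    set m1 : ℝ := (volume (Metric.ball ((c, t) : (Fin n → ℝ) × ℝ) (L / 2))).toReal with hm1
    set m2 : ℝ := (volume (Metric.ball ((c, t) : (Fin n → ℝ) × ℝ) L)).toReal with hm2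
    have hm1pos : 0 < m1 :=
      ENNReal.toReal_pos (Metric.measure_ball_pos _ _ hL2).ne' measure_ball_lt_top.ne
    have hm2pos : 0 < m2 :=
      ENNReal.toReal_pos (Metric.measure_ball_pos _ _ hL).ne' measure_ball_lt_top.ne
    have hm12 : m1 ≤ m2 := ENNReal.toReal_mono measure_ball_lt_top.ne
      (measure_mono (Metric.ball_subset_ball (by linarith)))
    have havg1 : (⨍ p in Metric.ball ((c, t) : (Fin n → ℝ) × ℝ) (L / 2), ‖v p‖ ^ 2)
        = m1⁻¹ * S1 := by rw [setAverage_eq, smul_eq_mul, measureReal_def]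
    have havg2 : (⨍ p in Metric.ball ((c, t) : (Fin n → ℝ) × ℝ) L, ‖u p‖ ^ 2)
        = m2⁻¹ * S2 := by rw [setAverage_eq, smul_eq_mul, measureReal_def]
    rw [havg1, havg2] at hcac
    have hS1le : S1 ≤ 4 * c₀ / L ^ 2 * S2 := by
      have h1 : S1 ≤ m1 * (c₀ / (L / 2) ^ 2 * (m2⁻¹ * S2)) := by
        have := mul_le_mul_of_nonneg_left hcac hm1pos.le
        rwa [mul_inv_cancel_left₀ hm1pos.ne'] at this
      have hKeq : c₀ / (L / 2) ^ 2 = 4 * c₀ / L ^ 2 := by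
        field_simp
        ring
      have hfrac : m1 * m2⁻¹ ≤ 1 := by
        rw [← div_eq_mul_inv]
        exact div_le_one_of_le₀ hm12 hm2pos.le
      calc S1 ≤ m1 * (c₀ / (L / 2) ^ 2 * (m2⁻¹ * S2)) := h1
        _ = (c₀ / (L / 2) ^ 2 * S2) * (m1 * m2⁻¹) := by ring
        _ ≤ (c₀ / (L / 2) ^ 2 * S2) * 1 :=
            mul_le_mul_of_nonneg_left hfrac (by positivity)
        _ = 4 * c₀ / L ^ 2 * S2 := by rw [mul_one, hKeq]
    have s4 : S2 ≤ ∫ p in A ×ˢ T, ‖u p‖ ^ 2 :=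
      setIntegral_mono_set hu2 (Filter.Eventually.of_forall fun p => by positivity)
        hball_sub.eventuallyLE
    have s5 : ∫ p in A ×ˢ T, ‖u p‖ ^ 2 = J := by
      have h := setIntegral_prod (μ := (volume : Measure (Fin n → ℝ)))
        (ν := (volume : Measure ℝ)) (s := A) (t := T)
        (fun p : (Fin n → ℝ) × ℝ => ‖u p‖ ^ 2) (hvol ▸ hu2)
      rw [← hvol] at h
      exact h
    have hS2J : S2 ≤ J := by rw [← s5]; exact s4
    calc (∫ x in A2, ∫ s in I, ‖v (x, s)‖ ^ 2) = ∫ p in A2 ×ˢ I, ‖v p‖ ^ 2 := heqF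
      _ ≤ S1 := s1.trans (le_of_eq s2)
      _ ≤ 4 * c₀ / L ^ 2 * S2 := hS1le
      _ ≤ 4 * c₀ / L ^ 2 * J := mul_le_mul_of_nonneg_left hS2J (by positivity)
  -- assemble
  have final : L * (∫ x in A2, ‖u (x, t)‖ ^ 2) ≤ (2 + 8 * c₀) * J := by
    have h := step2
    have h2 : 2 * L ^ 2 * (∫ x in A2, ∫ s in I, ‖v (x, s)‖ ^ 2)
        ≤ 2 * L ^ 2 * (4 * c₀ / L ^ 2 * J) := by
      refine mul_le_mul_of_nonneg_left stepv (by positivity)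
    have heq : 2 * L ^ 2 * (4 * c₀ / L ^ 2 * J) = 8 * c₀ * J := by
      field_simp; ring
    nlinarith [stepu]
  rw [div_mul_eq_mul_div, le_div_iff₀ hL]
  linarith [final]
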